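/- In a complete binary tree T_C, every vertex of the left boundary of the right subtree of any vertex v is a successive leaf of every vertex of the right boundary of the left subtree of v; that is, B_r(left-subtree(v)) × B_l(right-subtree(v)) ⊆ S(T_C) for every internal vertex v of T_C. -/

import Mathlib

/-- Full binary trees: every vertex has 0 or 2 children. -/
inductive FBT where
  | leaf : FBT
  | node : FBT → FBT → FBT
deriving DecidableEq

namespace FBT

/-- Depth of a full binary tree. -/
def depth : FBT → ℕ
  | leaf => 0
  | node a b => max a.depth b.depth + 1

/-- Positions (reversed root-paths: head is the edge nearest the vertex) of the
leaves of `T`, in left-to-right order. -/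
def leaves : FBT → List (List Bool)
  | leaf => [[]]
  | node a b => a.leaves.map (· ++ [false]) ++ b.leaves.map (· ++ [true])

/-- Total number of vertices. -/
def numNodes : FBT → ℕ
  | leaf => 1
  | node a b => a.numNodes + b.numNodes + 1

/-- Number of internal (non-leaf) vertices. -/
def internals : FBT → ℕ
  | leaf => 0
  | node a b => a.internals + b.internals + 1

/-- The recursive probability function π of the stick-breaking prior:
`pi l T pos` where `pos` is the (reversed) position of the root of `T`. -/
def pi (l : List Bool → ℝ) : FBT → List Bool → ℝ
  | leaf, pos => l pos
  | node a b, pos => (1 - l pos) * pi l a (false :: pos) * pi l b (true :: pos)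

/-- Probability of an internal tree: `p(T) = π(root)`. -/
def pTree (l : List Bool → ℝ) (T : FBT) : ℝ := pi l T []

/-- The memoized value m̃, with `m̃(parent(root)) = 1`. -/
noncomputable def mt (l : List Bool → ℝ) : List Bool → ℝ
  | [] => 1 - l []
  | (b :: p) => Real.sqrt (mt l p) * (1 - l (b :: p))

/-- The memoized value m at a vertex: `m(v) = m̃(parent v)^(1/2) · l v`. -/
noncomputable def mleaf (l : List Bool → ℝ) : List Bool → ℝ
  | [] => l []
  | (b :: p) => Real.sqrt (mt l p) * l (b :: p)

/-- `m̃(parent v)`, with the convention `m̃(parent root) = 1`. -/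
noncomputable def mparent (l : List Bool → ℝ) : List Bool → ℝ
  | [] => 1
  | (_ :: p) => mt l p

/-- The set of internal trees of the complete binary tree of depth `D`,
i.e. full binary trees of depth at most `D`. -/
def trees : ℕ → Finset FBT
  | 0 => {leaf}
  | (D+1) => insert leaf ((trees D ×ˢ trees D).image (fun p => node p.1 p.2))

/-- Consecutive-leaf pairs of a single tree. -/
def transitions (T : FBT) : Finset (List Bool × List Bool) :=
  (T.leaves.zip T.leaves.tail).toFinset

/-- The set `S(T_C)` of successive leaf transitions of the complete binary
tree of depth `D`. -/
def S (D : ℕ) : Finset (List Bool × List Bool) := (trees D).biUnion transitions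

/-- The left boundary of the complete binary tree of depth `D`. -/
def Bl (D : ℕ) : Finset (List Bool) :=
  (Finset.range (D+1)).image (fun k => List.replicate k false)

/-- The right boundary of the complete binary tree of depth `D`. -/
def Br (D : ℕ) : Finset (List Bool) :=
  (Finset.range (D+1)).image (fun k => List.replicate k true)

/-- The marginalisation dynamic-programming table (indexed from `n = 1`). -/
def M (S : Finset (List Bool × List Bool)) (Bl : Finset (List Bool))
    (w : ℕ → List Bool → ℝ) (mw : List Bool → ℝ) : ℕ → List Bool → ℝ
  | 0, _ => 0
  | 1, v => if v ∈ Bl then w 1 v * mw v else 0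
  | (n+2), v => w (n+2) v * mw v *
      ∑ p ∈ S.filter (fun p => p.2 = v), M S Bl w mw (n+1) p.1

/-- The Viterbi-style max-product dynamic-programming table. -/
def Mstar (S : Finset (List Bool × List Bool)) (Bl : Finset (List Bool))
    (w : ℕ → List Bool → NNReal) (mw : List Bool → NNReal) : ℕ → List Bool → NNReal
  | 0, _ => 0
  | 1, v => if v ∈ Bl then w 1 v * mw v else 0
  | (n+2), v => w (n+2) v * mw v *
      (S.filter (fun p => p.2 = v)).sup (fun p => Mstar S Bl w mw (n+1) p.1)

/-- The complete binary tree of depth `D`, as a full binary tree. -/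
def completeTree : ℕ → FBT
  | 0 => leaf
  | (D+1) => node (completeTree D) (completeTree D)

/-- Right comb: rightmost leaf at depth n. -/
def rcomb : ℕ → FBT
  | 0 => leaf
  | n+1 => node leaf (rcomb n)

/-- Left comb: leftmost leaf at depth n. -/
def lcomb : ℕ → FBT
  | 0 => leaf
  | n+1 => node (lcomb n) leaf

/-- Embed a tree at the end of a root-path `r` (head = edge at root). -/
def embed' : List Bool → FBT → FBT
  | [], T => T
  | false :: r, T => node (embed' r T) leaf
  | true :: r, T => node leaf (embed' r T)

lemma rcomb_leaves (n : ℕ) : ∃ u, (rcomb n).leaves = u ++ [List.replicate n true] := by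
  induction n with
  | zero => exact ⟨[], rfl⟩
  | succ n ih =>
    obtain ⟨u, hu⟩ := ih
    refine ⟨[false] :: u.map (· ++ [true]), ?_⟩
    simp [rcomb, leaves, hu, List.replicate_succ']

lemma lcomb_leaves (n : ℕ) : ∃ v, (lcomb n).leaves = List.replicate n false :: v := by
  induction n with
  | zero => exact ⟨[], rfl⟩
  | succ n ih =>
    obtain ⟨v, hv⟩ := ih
    refine ⟨v.map (· ++ [false]) ++ [[true]], ?_⟩
    simp [lcomb, leaves, hv, List.replicate_succ']

lemma rcomb_depth (n : ℕ) : (rcomb n).depth ≤ n := by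
  induction n with
  | zero => simp [rcomb, depth]
  | succ n ih => simp [rcomb, depth]; omega

lemma lcomb_depth (n : ℕ) : (lcomb n).depth ≤ n := by
  induction n with
  | zero => simp [lcomb, depth]
  | succ n ih => simp [lcomb, depth]; omega

lemma embed'_depth (r : List Bool) (T : FBT) :
    (embed' r T).depth ≤ r.length + T.depth := by
  induction r with
  | nil => simp [embed']
  | cons b r ih =>
    cases b <;> simp [embed', depth] <;> omega

lemma embed'_leaves_infix (r : List Bool) (T : FBT) {a b : List Bool}
    (h : [a, b] <:+: T.leaves) :
    [a ++ r.reverse, b ++ r.reverse] <:+: (embed' r T).leaves := by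
  induction r generalizing a b with
  | nil => simpa [embed'] using h
  | cons c r ih =>
    have h' := ih h
    have hmap : [(a ++ r.reverse) ++ [c], (b ++ r.reverse) ++ [c]] <:+:
        (embed' r T).leaves.map (· ++ [c]) := by
      simpa using h'.map (· ++ [c])
    cases c with
    | false =>
      simp only [embed', leaves]
      have := hmap.trans ((List.prefix_append _ [[true]]).isInfix)
      simpa [List.append_assoc] using this
    | true =>
      simp only [embed', leaves]
      have := hmap.trans ((List.suffix_append [[false]] _).isInfix)
      simpa [List.append_assoc] using this

lemma mem_trees_of_depth {D : ℕ} {T : FBT} (h : T.depth ≤ D) : T ∈ trees D := by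
  induction D generalizing T with
  | zero =>
    cases T with
    | leaf => simp [trees]
    | node a b => simp [depth] at h
  | succ D ih =>
    cases T with
    | leaf => simp [trees]
    | node a b =>
      simp [depth] at h
      simp only [trees, Finset.mem_insert]
      right
      exact Finset.mem_image.2 ⟨(a, b), Finset.mem_product.2 ⟨ih h.1, ih h.2⟩, rfl⟩

lemma mem_zip_tail_cons {α : Type*} {p : α × α} {l : List α} (c : α)
    (h : p ∈ l.zip l.tail) : p ∈ (c :: l).zip l := by
  cases l with
  | nil => simp at h
  | cons x xs => exact List.mem_cons_of_mem _ h

lemma pair_mem_zip_tail {α : Type*} {a b : α} {l : List α}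
    (h : [a, b] <:+: l) : (a, b) ∈ l.zip l.tail := by
  obtain ⟨s, t, rfl⟩ := h
  induction s with
  | nil => simp [List.zip_cons_cons]
  | cons c s ih => exact mem_zip_tail_cons c ih

end FBT
/-- for every internal vertex `q` of the depth-`D` complete tree,
every vertex of the right boundary of its left subtree, paired with every
vertex of the left boundary of its right subtree, is a successive leaf
transition. -/
theorem stmt13 (D : ℕ) (q : List Bool) (hq : q.length < D) (j k : ℕ)
    (hj : j ≤ D - q.length - 1) (hk : k ≤ D - q.length - 1) :
    (List.replicate j true ++ false :: q, List.replicate k false ++ true :: q) ∈ FBT.S D := by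
  classical
  set core : FBT := FBT.node (FBT.rcomb j) (FBT.lcomb k) with hcore
  set T : FBT := FBT.embed' q.reverse core with hT
  -- the pair is an infix of the leaves of core
  obtain ⟨u, hu⟩ := FBT.rcomb_leaves j
  obtain ⟨v, hv⟩ := FBT.lcomb_leaves k
  have hcoreInf : [List.replicate j true ++ [false], List.replicate k false ++ [true]]
      <:+: core.leaves := by
    refine ⟨u.map (· ++ [false]), v.map (· ++ [true]), ?_⟩
    simp [hcore, FBT.leaves, hu, hv]
  have hInf := FBT.embed'_leaves_infix q.reverse core hcoreInf
  rw [List.reverse_reverse] at hInf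
  have hInf' : [List.replicate j true ++ false :: q, List.replicate k false ++ true :: q]
      <:+: T.leaves := by
    simpa [List.append_assoc] using hInf
  have hmem : (List.replicate j true ++ false :: q, List.replicate k false ++ true :: q)
      ∈ T.transitions := by
    simp only [FBT.transitions, List.mem_toFinset]
    exact FBT.pair_mem_zip_tail hInf'
  have hdepth : T.depth ≤ D := by
    rw [hT]
    have h1 := FBT.embed'_depth q.reverse core
    have h2 : core.depth ≤ max j k + 1 := by
      have := FBT.rcomb_depth j
      have := FBT.lcomb_depth k
      simp [hcore, FBT.depth]; omega
    simp only [List.length_reverse] at h1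
    have : max j k ≤ D - q.length - 1 := by omega
    omega
  exact Finset.mem_biUnion.2 ⟨T, FBT.mem_trees_of_depth hdepth, hmem⟩
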